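/- Consider an ALG-schedule and a reference time t ≥ 0. Let j ∈ Cl(t) and let k be a job with r k ≤ t and k ∉ N(t), and suppose (j,k) is an E_N-edge of the borrow graph. Then y_k(s_k) ≤ y_j(s_j). -/
import Mathlib


open MeasureTheory Set

open scoped Classical

noncomputable section

variable {J : Type*}

/-- Total work done on job `j` by time `u` under the schedule `σ`. -/
def workDone (σ : ℝ → J → ℝ) (j : J) (u : ℝ) : ℝ := ∫ v in (0:ℝ)..u, σ v j

/-- Remaining processing time of job `j` at time `u`. -/
def remT (p : J → ℝ) (σ : ℝ → J → ℝ) (j : J) (u : ℝ) : ℝ := p j - workDone σ j u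

/-- Completion time of job `j`: the least `u` with `workDone σ j u = p j`,
    and `⊤` if the job never completes. -/
def cTime (p : J → ℝ) (σ : ℝ → J → ℝ) (j : J) : EReal :=
  sInf ((fun v : ℝ => (v : EReal)) '' {v : ℝ | workDone σ j v = p j})

/-- Job `j` is available at time `u`: released and not yet completed. -/
def availAt (r p : J → ℝ) (σ : ℝ → J → ℝ) (u : ℝ) (j : J) : Prop :=
  r j ≤ u ∧ (u : EReal) < cTime p σ j

/-- Job `j` is processed at time `u`. -/
def procAt (σ : ℝ → J → ℝ) (u : ℝ) (j : J) : Prop := 0 < σ u j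

/-- Job `j` is non-clairvoyant at time `u`. -/
def ncAt (r p : J → ℝ) (α : ℝ) (σ : ℝ → J → ℝ) (u : ℝ) (j : J) : Prop :=
  availAt r p σ u j ∧ workDone σ j u ≤ α * p j

/-- Job `j` is clairvoyant at time `u`. -/
def clAt (r p : J → ℝ) (α : ℝ) (σ : ℝ → J → ℝ) (u : ℝ) (j : J) : Prop :=
  availAt r p σ u j ∧ α * p j < workDone σ j u

/-- The time at which job `j` emits its signal: the least `u` with
    `workDone σ j u = α * p j`. -/
def emitT (p : J → ℝ) (α : ℝ) (σ : ℝ → J → ℝ) (j : J) : ℝ :=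
  sInf {u : ℝ | workDone σ j u = α * p j}

/-- Data of an instance: nonnegative release dates, positive processing times
    and `α ∈ (0,1)`. -/
structure IsInstance (r p : J → ℝ) (α : ℝ) : Prop where
  r_nonneg : ∀ j, 0 ≤ r j
  p_pos : ∀ j, 0 < p j
  alpha_mem : α ∈ Set.Ioo (0 : ℝ) 1

/-- `σ` is a (feasible, preemptive, single machine) schedule. -/
structure IsSchedule [Fintype J] (r p : J → ℝ) (σ : ℝ → J → ℝ) : Prop where
  meas : ∀ j, Measurable fun u => σ u j
  nonneg : ∀ u j, 0 ≤ σ u j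
  sum_le_one : ∀ u, ∑ j, σ u j ≤ 1
  zero_before_release : ∀ u j, u < r j → σ u j = 0
  workDone_le : ∀ u j, workDone σ j u ≤ p j

/-- A schedule is non-idling if it uses the full machine capacity whenever
    some job is available. -/
def NonIdling [Fintype J] (r p : J → ℝ) (σ : ℝ → J → ℝ) : Prop :=
  ∀ u, (∃ j, availAt r p σ u j) → ∑ j, σ u j = 1

/-- The SRPT condition at time `u`: `Cl(u) ≠ ∅` and
    `min_{j ∈ Cl(u)} p_j(u) ≤ ((1-α)/α) · min_{j ∈ N(u)} y_j(u)`
    (the minimum over the empty set being `+∞`). -/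
def SrptCond (r p : J → ℝ) (α : ℝ) (σ : ℝ → J → ℝ) (u : ℝ) : Prop :=
  ∃ k, clAt r p α σ u k ∧
    ∀ j, ncAt r p α σ u j → remT p σ k u ≤ ((1 - α) / α) * workDone σ j u

/-- `k` is a clairvoyant job of minimal remaining processing time at `u`,
    emitting last among those. -/
def IsSrptChoice (r p : J → ℝ) (α : ℝ) (σ : ℝ → J → ℝ) (u : ℝ) (k : J) : Prop :=
  clAt r p α σ u k ∧
    (∀ j, clAt r p α σ u j → remT p σ k u ≤ remT p σ j u) ∧
    (∀ j, clAt r p α σ u j → remT p σ j u = remT p σ k u →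
      emitT p α σ j ≤ emitT p α σ k)

/-- `j` is a non-clairvoyant job with minimal progress at time `u`. -/
def IsMinNc (r p : J → ℝ) (α : ℝ) (σ : ℝ → J → ℝ) (u : ℝ) (j : J) : Prop :=
  ncAt r p α σ u j ∧ ∀ j', ncAt r p α σ u j' → workDone σ j u ≤ workDone σ j' u

/-- `σ` is an ALG-schedule: non-idling, and at any time with available jobs it
    either runs a single clairvoyant job of shortest remaining processing time
    (breaking ties by latest emission) when the SRPT condition holds, or it runs
    exactly the non-clairvoyant jobs of minimal progress at equal rates. -/
structure IsALG [Fintype J] (r p : J → ℝ) (α : ℝ) (σ : ℝ → J → ℝ) : Prop where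
  sched : IsSchedule r p σ
  nonidling : NonIdling r p σ
  srpt_branch : ∀ u, (∃ j, availAt r p σ u j) → SrptCond r p α σ u →
    ∃ k, IsSrptChoice r p α σ u k ∧ ∀ j, j ≠ k → σ u j = 0
  setf_branch : ∀ u, (∃ j, availAt r p σ u j) → ¬ SrptCond r p α σ u →
    (∀ j, procAt σ u j → IsMinNc r p α σ u j) ∧
    (∀ j j', IsMinNc r p α σ u j → IsMinNc r p α σ u j' → σ u j = σ u j')

/-- Right endpoint `min (C_j, t)` of the lifetime of `j` w.r.t. reference time `t`. -/
def lifeEnd (p : J → ℝ) (σ : ℝ → J → ℝ) (t : ℝ) (j : J) : ℝ :=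
  (min (cTime p σ j) (t : EReal)).toReal

/-- The lifetime `I_j = [r j, min (C_j, t)]` of job `j`. -/
def lifetime (r p : J → ℝ) (σ : ℝ → J → ℝ) (t : ℝ) (j : J) : Set ℝ :=
  Set.Icc (r j) (lifeEnd p σ t j)

/-- `E_N`-edge of the borrow graph: `i` is processed at some time of `I_j`
    while being non-clairvoyant. -/
def ENedge (r p : J → ℝ) (α : ℝ) (σ : ℝ → J → ℝ) (t : ℝ) (j i : J) : Prop :=
  ∃ u ∈ lifetime r p σ t j, procAt σ u i ∧ ncAt r p α σ u i

/-- `E_C`-edge of the borrow graph: `i` is processed at some time of `I_j`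
    while being clairvoyant. -/
def ECedge (r p : J → ℝ) (α : ℝ) (σ : ℝ → J → ℝ) (t : ℝ) (j i : J) : Prop :=
  ∃ u ∈ lifetime r p σ t j, procAt σ u i ∧ clAt r p α σ u i

/-- Edge of the borrow graph `G_B`. -/
def borrowEdge (r p : J → ℝ) (α : ℝ) (σ : ℝ → J → ℝ) (t : ℝ) (j i : J) : Prop :=
  ENedge r p α σ t j i ∨ ECedge r p α σ t j i

/-- `reaches j i` iff `i ∈ R_j`, i.e. `i` is reachable from `j` in the borrow
    graph (`j` itself included). -/
def reaches (r p : J → ℝ) (α : ℝ) (σ : ℝ → J → ℝ) (t : ℝ) : J → J → Prop :=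
  Relation.ReflTransGen (borrowEdge r p α σ t)

/-- Truncated progress `ȳ_j = min (y_j(t), α p_j)`. -/
def truncY (p : J → ℝ) (α : ℝ) (σ : ℝ → J → ℝ) (t : ℝ) (j : J) : ℝ :=
  min (workDone σ j t) (α * p j)

end


section Aux14

open MeasureTheory intervalIntegral

variable {J : Type*} [Fintype J] {r p : J → ℝ} {α : ℝ} {σ : ℝ → J → ℝ}

lemma sigma_le_one (hs : IsSchedule r p σ) (u : ℝ) (j : J) : σ u j ≤ 1 :=
  le_trans (Finset.single_le_sum (fun i _ => hs.nonneg u i) (Finset.mem_univ j))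
    (hs.sum_le_one u)

lemma sigma_intInt (hs : IsSchedule r p σ) (j : J) (a b : ℝ) :
    IntervalIntegrable (fun v => σ v j) volume a b := by
  apply (_root_.intervalIntegrable_const (c := (1 : ℝ))).mono_fun
    ((hs.meas j).aestronglyMeasurable.restrict)
  filter_upwards with x
  have h1 := hs.nonneg x j
  have h2 := sigma_le_one hs x j
  simp only [Real.norm_eq_abs, abs_of_nonneg h1, abs_one]
  exact h2

lemma wd_cont (hs : IsSchedule r p σ) (j : J) : Continuous (workDone σ j) :=
  intervalIntegral.continuous_primitive (sigma_intInt hs j) 0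

lemma wd_mono (hs : IsSchedule r p σ) (j : J) : Monotone (workDone σ j) := by
  intro a b hab
  have h : workDone σ j a + ∫ v in a..b, σ v j = workDone σ j b :=
    intervalIntegral.integral_add_adjacent_intervals (sigma_intInt hs j 0 a)
      (sigma_intInt hs j a b)
  have hpos : 0 ≤ ∫ v in a..b, σ v j :=
    intervalIntegral.integral_nonneg hab (fun u _ => hs.nonneg u j)
  linarith

lemma wd_nonpos (hs : IsSchedule r p σ) (j : J) {u : ℝ} (hu : u ≤ 0) :
    workDone σ j u ≤ 0 := by
  have h : workDone σ j u = -∫ v in u..(0:ℝ), σ v j := by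
    rw [workDone, intervalIntegral.integral_symm]
  have hpos : 0 ≤ ∫ v in u..(0:ℝ), σ v j :=
    intervalIntegral.integral_nonneg hu (fun v _ => hs.nonneg v j)
  linarith

lemma wd_zero (j : J) : workDone σ j 0 = 0 := by
  simp [workDone]

/-- If the work done reaches a positive level `c` by some time `T ≥ 0`, then the first
time the work done equals `c` is well-behaved. -/
lemma first_hit_spec (hs : IsSchedule r p σ) (j : J) {c T : ℝ} (hc : 0 < c)
    (hT0 : 0 ≤ T) (hT : c ≤ workDone σ j T) :
    workDone σ j (sInf {u : ℝ | workDone σ j u = c}) = c ∧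
      sInf {u : ℝ | workDone σ j u = c} ≤ T ∧
      ∀ v, workDone σ j v = c → sInf {u : ℝ | workDone σ j u = c} ≤ v := by
  set S := {u : ℝ | workDone σ j u = c} with hS
  have hbdd : BddBelow S := by
    refine ⟨0, fun u hu => ?_⟩
    by_contra h
    push_neg at h
    have := wd_nonpos hs j h.le
    have : workDone σ j u = c := hu
    linarith
  have hclosed : IsClosed S := isClosed_eq (wd_cont hs j) continuous_const
  have hne : S.Nonempty := by
    have h0 : workDone σ j 0 = 0 := wd_zero j
    have hmem : c ∈ Set.Icc (workDone σ j 0) (workDone σ j T) := by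
      rw [h0]; exact ⟨hc.le, hT⟩
    obtain ⟨w, hw, hweq⟩ :=
      intermediate_value_Icc hT0 ((wd_cont hs j).continuousOn) hmem
    exact ⟨w, hweq⟩
  have hmem : sInf S ∈ S := hclosed.csInf_mem hne hbdd
  obtain ⟨w, hw⟩ := hne
  refine ⟨hmem, ?_, fun v hv => csInf_le hbdd hv⟩
  -- need sInf S ≤ T : pick the IVT witness again
  have h0 : workDone σ j 0 = 0 := wd_zero j
  have hmem' : c ∈ Set.Icc (workDone σ j 0) (workDone σ j T) := by
    rw [h0]; exact ⟨hc.le, hT⟩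
  obtain ⟨w', hw', hweq'⟩ :=
    intermediate_value_Icc hT0 ((wd_cont hs j).continuousOn) hmem'
  exact le_trans (csInf_le hbdd hweq') hw'.2

lemma cTime_eq_coe (hs : IsSchedule r p σ) (k : J) (hp : 0 < p k)
    (hne : {v : ℝ | workDone σ k v = p k}.Nonempty) :
    cTime p σ k = ((sInf {v : ℝ | workDone σ k v = p k} : ℝ) : EReal) ∧
      workDone σ k (sInf {v : ℝ | workDone σ k v = p k}) = p k := by
  set S := {v : ℝ | workDone σ k v = p k} with hS
  have hbdd : BddBelow S := by
    refine ⟨0, fun u hu => ?_⟩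
    by_contra h
    push_neg at h
    have := wd_nonpos hs k h.le
    have : workDone σ k u = p k := hu
    linarith
  have hclosed : IsClosed S := isClosed_eq (wd_cont hs k) continuous_const
  have hmem : sInf S ∈ S := hclosed.csInf_mem hne hbdd
  constructor
  · apply le_antisymm
    · exact sInf_le ⟨sInf S, hmem, rfl⟩
    · refine le_sInf ?_
      rintro x ⟨v, hv, rfl⟩
      exact EReal.coe_le_coe_iff.mpr (csInf_le hbdd hv)
  · exact hmem

lemma lt_cTime (hs : IsSchedule r p σ) (k : J) (hp : 0 < p k) {v : ℝ}
    (h : workDone σ k v < p k) : (v : EReal) < cTime p σ k := by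
  by_cases hne : {u : ℝ | workDone σ k u = p k}.Nonempty
  · obtain ⟨heq, hmem⟩ := cTime_eq_coe hs k hp hne
    rw [heq, EReal.coe_lt_coe_iff]
    by_contra hcon
    push_neg at hcon
    have := wd_mono hs k hcon
    rw [hmem] at this
    linarith
  · have : (fun v : ℝ => (v : EReal)) '' {u : ℝ | workDone σ k u = p k} = ∅ := by
      rw [Set.not_nonempty_iff_eq_empty] at hne
      simp [hne]
    rw [cTime, this, sInf_empty]
    exact EReal.coe_lt_top v

lemma cTime_le_exists (hs : IsSchedule r p σ) (k : J) (hp : 0 < p k) {t : ℝ}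
    (h : cTime p σ k ≤ (t : EReal)) : ∃ m ≤ t, workDone σ k m = p k := by
  by_cases hne : {u : ℝ | workDone σ k u = p k}.Nonempty
  · obtain ⟨heq, hmem⟩ := cTime_eq_coe hs k hp hne
    rw [heq, EReal.coe_le_coe_iff] at h
    exact ⟨_, h, hmem⟩
  · exfalso
    have : (fun v : ℝ => (v : EReal)) '' {u : ℝ | workDone σ k u = p k} = ∅ := by
      rw [Set.not_nonempty_iff_eq_empty] at hne
      simp [hne]
    rw [cTime, this, sInf_empty] at h
    exact absurd h (not_le.mpr (EReal.coe_lt_top t))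

/-- Core lemma: if `k` is processed at `v ≤ t` while non-clairvoyant, and `j` is released
by `v` and alive past `t`, then the work done on `k` at `v` is at most `α * p j`. -/
lemma core_le (hinst : IsInstance r p α) (halg : IsALG r p α σ) {t v : ℝ} (hvt : v ≤ t)
    (j k : J) (hσ : 0 < σ v k) (hyk : workDone σ k v ≤ α * p k)
    (hrj : r j ≤ v) (hjt : (t : EReal) < cTime p σ j) :
    workDone σ k v ≤ α * p j := by
  obtain ⟨hα0, hα1⟩ := hinst.alpha_mem
  have hpk := hinst.p_pos k
  have hpj := hinst.p_pos j
  have hrk : r k ≤ v := by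
    by_contra h
    push_neg at h
    exact absurd (halg.sched.zero_before_release v k h) (ne_of_gt hσ)
  have hck : (v : EReal) < cTime p σ k :=
    lt_cTime halg.sched k hpk (lt_of_le_of_lt hyk (by nlinarith))
  have hkav : availAt r p σ v k := ⟨hrk, hck⟩
  have hknc : ncAt r p α σ v k := ⟨hkav, hyk⟩
  have hjav : availAt r p σ v j :=
    ⟨hrj, lt_of_le_of_lt (EReal.coe_le_coe_iff.mpr hvt) hjt⟩
  have hA : ∃ i, availAt r p σ v i := ⟨k, hkav⟩
  by_cases hS : SrptCond r p α σ v
  · exfalso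
    obtain ⟨k', hk', hzero⟩ := halg.srpt_branch v hA hS
    have hkk : k = k' := by
      by_contra h
      exact absurd (hzero k h) (ne_of_gt hσ)
    subst hkk
    have := hk'.1.2
    linarith
  · obtain ⟨h1, _⟩ := halg.setf_branch v hA hS
    have hmin : IsMinNc r p α σ v k := h1 k hσ
    by_cases hjnc : workDone σ j v ≤ α * p j
    · exact le_trans (hmin.2 j ⟨hjav, hjnc⟩) hjnc
    · push_neg at hjnc
      have hjcl : clAt r p α σ v j := ⟨hjav, hjnc⟩
      simp only [SrptCond, not_exists, not_and, not_forall, not_le] at hS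
      obtain ⟨i, hinc, hi⟩ := hS j hjcl
      have hki : workDone σ k v ≤ workDone σ i v := hmin.2 i hinc
      have hrem : remT p σ j v = p j - workDone σ j v := rfl
      rw [hrem] at hi
      -- ((1-α)/α) * y_i < p j - y_j < (1-α) p j, and y_k ≤ y_i
      have h2 : (1 - α) / α * workDone σ k v < (1 - α) * p j := by
        have hc : 0 ≤ (1 - α) / α := div_nonneg (by linarith) hα0.le
        nlinarith [mul_le_mul_of_nonneg_left hki hc]
      have h3 : (1 - α) * workDone σ k v < (1 - α) * (α * p j) := by
        have h4 := mul_lt_mul_of_pos_left h2 hα0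
        calc (1 - α) * workDone σ k v = α * ((1 - α) / α * workDone σ k v) := by
              field_simp
          _ < α * ((1 - α) * p j) := h4
          _ = (1 - α) * (α * p j) := by ring
      have h5 := (mul_lt_mul_iff_right₀ (sub_pos.mpr hα1)).mp h3
      linarith

end Aux14

/-- If `j ∈ Cl(t)`, `k` is a job with `r k ≤ t` and
`k ∉ N(t)`, and `(j,k)` is an `E_N`-edge of the borrow graph, then
`y_k(s_k) ≤ y_j(s_j)`. -/
theorem stmt14 {J : Type*} [Fintype J] {r p : J → ℝ} {α : ℝ} {σ : ℝ → J → ℝ}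
    (hinst : IsInstance r p α) (halg : IsALG r p α σ) (t : ℝ) (ht : 0 ≤ t)
    (j k : J) (hj : clAt r p α σ t j) (hk₁ : r k ≤ t) (hk₂ : ¬ ncAt r p α σ t k)
    (he : ENedge r p α σ t j k) :
    workDone σ k (emitT p α σ k) ≤ workDone σ j (emitT p α σ j) := by
  obtain ⟨hα0, hα1⟩ := hinst.alpha_mem
  have hpk := hinst.p_pos k
  have hpj := hinst.p_pos j
  have hs := halg.sched
  -- the work on k reaches level α * p k by time t
  have hykt : α * p k ≤ workDone σ k t := by
    by_cases hav : availAt r p σ t k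
    · by_contra h
      push_neg at h
      exact hk₂ ⟨hav, h.le⟩
    · have hct : cTime p σ k ≤ (t : EReal) := by
        rcases le_or_gt (cTime p σ k) ((t : ℝ) : EReal) with h | h
        · exact h
        · exact absurd ⟨hk₁, h⟩ hav
      obtain ⟨m, hm, hmeq⟩ := cTime_le_exists hs k hpk hct
      have hmono := wd_mono hs k hm
      rw [hmeq] at hmono
      nlinarith
  have hyjt : α * p j ≤ workDone σ j t := hj.2.le
  obtain ⟨hek, hekt, hekmin⟩ :=
    first_hit_spec hs k (c := α * p k) (by positivity) ht hykt
  obtain ⟨hej, -, -⟩ :=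
    first_hit_spec hs j (c := α * p j) (by positivity) ht hyjt
  have hek' : workDone σ k (emitT p α σ k) = α * p k := hek
  have hej' : workDone σ j (emitT p α σ j) = α * p j := hej
  have hekt' : emitT p α σ k ≤ t := hekt
  rw [hek', hej']
  -- extract the witness time u from the E_N-edge
  obtain ⟨u, hu, hproc, hnc⟩ := he
  have hle : lifeEnd p σ t j = t := by
    rw [lifeEnd, min_eq_right hj.1.2.le, EReal.toReal_coe]
  rw [lifetime, hle] at hu
  have hut : u ≤ t := hu.2
  have hrju : r j ≤ u := hu.1
  have hprock : 0 < σ u k := hproc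
  rcases (lt_or_eq_of_le hnc.2) with hlt | heq
  · -- y_k(u) < α p k, so u < s_k; work near s_k
    set sk := emitT p α σ k with hsk
    have husk : u < sk := by
      by_contra h
      push_neg at h
      have := wd_mono hs k h
      rw [hek'] at this
      linarith
    by_contra hcon
    push_neg at hcon
    have hopen : IsOpen {w : ℝ | α * p j < workDone σ k w} :=
      isOpen_lt continuous_const (wd_cont hs k)
    have hmemo : sk ∈ {w : ℝ | α * p j < workDone σ k w} := by
      simp only [Set.mem_setOf_eq, hek']
      exact hcon
    obtain ⟨ε, hε, hball⟩ := Metric.isOpen_iff.mp hopen sk hmemo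
    set a := max u (sk - ε / 2) with ha
    have ha1 : a < sk := max_lt husk (by linarith)
    have ha2 : α * p j < workDone σ k a := by
      apply hball
      rw [Metric.mem_ball, Real.dist_eq]
      have h1 : sk - ε / 2 ≤ a := le_max_right _ _
      rw [abs_of_nonpos (by linarith)]
      linarith
    have ha3 : workDone σ k a < α * p k := by
      have h := wd_mono hs k ha1.le
      rw [hek'] at h
      rcases h.lt_or_eq with h' | h'
      · exact h'
      · exact absurd (hekmin a h') (not_le.mpr ha1)
    have hpos : 0 < ∫ w in a..sk, σ w k := by
      have hadd : workDone σ k a + ∫ w in a..sk, σ w k = workDone σ k sk :=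
        intervalIntegral.integral_add_adjacent_intervals (sigma_intInt hs k 0 a)
          (sigma_intInt hs k a sk)
      rw [hek'] at hadd
      linarith
    have hex : ∃ v ∈ Set.Icc a sk, 0 < σ v k := by
      by_contra h
      push_neg at h
      have hzero : ∫ w in a..sk, σ w k = 0 := by
        have hEq : Set.EqOn (fun w => σ w k) (fun _ => (0 : ℝ)) (Set.uIcc a sk) := by
          intro x hx
          rw [Set.uIcc_of_le ha1.le] at hx
          exact le_antisymm (h x hx) (hs.nonneg x k)
        rw [intervalIntegral.integral_congr hEq]
        simp
      linarith
    obtain ⟨v, hv, hσv⟩ := hex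
    have hyv1 : α * p j < workDone σ k v := lt_of_lt_of_le ha2 (wd_mono hs k hv.1)
    have hyv2 : workDone σ k v ≤ α * p k := by
      have h := wd_mono hs k hv.2
      rwa [hek'] at h
    have hcore := core_le hinst halg (le_trans hv.2 hekt') j k hσv hyv2
      (le_trans hrju (le_trans (le_max_left u (sk - ε / 2)) hv.1)) hj.1.2
    linarith
  · -- y_k(u) = α p k: apply the core lemma at u directly
    have hcore := core_le hinst halg hut j k hprock hnc.2 hrju hj.1.2
    rw [← heq]
    exact hcore
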